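/- Let I = (K_n^*, s, t, c, Q) be a QSPP instance with n ≥ 7, c = 0, and q_{ef} = 0 for every pair of arcs not contained together in any s-t path. Then CP_k ≤ (n−k)·((k−3)/(k−5))·CP_{k−1} for every k = 6, …, n−1. -/

import Mathlib

/-- An `s`-`t` path in the digraph on vertex type `V` with arc relation `A`,
represented as the list of its (distinct) vertices. -/
def IsPath {V : Type*} (A : V → V → Prop) (s t : V) (P : List V) : Prop :=
  2 ≤ P.length ∧ P.head? = some s ∧ P.getLast? = some t ∧ P.Nodup ∧ P.Chain' A

/-- The arcs traversed by a path, as the list of ordered pairs of consecutive vertices. -/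
def arcsOf {V : Type*} (P : List V) : List (V × V) :=
  P.zip P.tail

/-- Linear cost `C(P,c)` of a path. -/
noncomputable def linCost {V : Type*} (c : V × V → ℝ) (P : List V) : ℝ :=
  ((arcsOf P).map c).sum

/-- Total (quadratic) cost `C(P,c,Q)` of a path: the sum of the interaction costs over all
ordered pairs of arcs of `P` plus the sum of the linear costs of the arcs of `P`. -/
noncomputable def cost {V : Type*} (c : V × V → ℝ) (Q : V × V → V × V → ℝ)
    (P : List V) : ℝ :=
  ((arcsOf P).map fun e => ((arcsOf P).map fun f => Q e f).sum).sum + linCost c P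

/-- A QSPP instance `(G,s,t,c,Q)` is linearizable if there is a nonnegative cost vector `c'`
such that `C(P,c,Q) = C(P,c')` for every `s`-`t` path `P`. -/
def Linearizable {V : Type*} (A : V → V → Prop) (s t : V) (c : V × V → ℝ)
    (Q : V × V → V × V → ℝ) : Prop :=
  ∃ c' : V × V → ℝ, (∀ e, 0 ≤ c' e) ∧
    ∀ P, IsPath A s t P → cost c Q P = linCost c' P

/-- The arc relation of the complete symmetric digraph `K_n^*` on vertices `1,…,n`
with source `1` and target `n`, from which the incoming arcs of the source, the
outgoing arcs of the target and the arc from source to target have been removed. -/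
def knArc (n : ℕ) : ℕ → ℕ → Prop := fun i j =>
  1 ≤ i ∧ i ≤ n ∧ 1 ≤ j ∧ j ≤ n ∧ i ≠ j ∧ j ≠ 1 ∧ i ≠ n ∧ ¬(i = 1 ∧ j = n)

/-- `CP_k`: the total cost (with zero linear costs) of all `s`-`t` paths of length `k`
in `K_n^*`. -/
noncomputable def CPsum (n : ℕ) (Q : ℕ × ℕ → ℕ × ℕ → ℝ) (k : ℕ) : ℝ :=
  ∑ᶠ (P : List ℕ) (_ : IsPath (knArc n) 1 n P ∧ P.length = k + 1),
    cost (fun _ => 0) Q P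


open Finset


noncomputable def quadQ (Q : ℕ × ℕ → ℕ × ℕ → ℝ) (L : List (ℕ × ℕ)) : ℝ :=
  (L.map fun e => (L.map fun f => Q e f).sum).sum

lemma sum_map_getD {α : Type*} (L : List α) (f : α → ℝ) (d : α) :
    (L.map f).sum = ∑ a ∈ Finset.range L.length, f (L.getD a d) := by
  induction L with
  | nil => simp
  | cons x L ih => simp [Finset.sum_range_succ', ih, add_comm]

lemma quad_eq_sum (Q : ℕ × ℕ → ℕ × ℕ → ℝ) (L : List (ℕ × ℕ)) :
    quadQ Q L = ∑ a ∈ range L.length, ∑ b ∈ range L.length,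
      Q (L.getD a (0,0)) (L.getD b (0,0)) := by
  rw [quadQ, sum_map_getD _ _ (0,0)]
  exact Finset.sum_congr rfl fun a _ => sum_map_getD _ _ (0,0)

lemma getD_eraseIdx {α : Type*} (L : List α) (d : α) {j a : ℕ} (hj : j < L.length)
    (ha : a < L.length - 1) :
    (L.eraseIdx j).getD a d = if a < j then L.getD a d else L.getD (a+1) d := by
  have hl : (L.eraseIdx j).length = L.length - 1 := by
    simp [List.length_eraseIdx, hj]
  rw [List.getD_eq_getElem _ _ (by omega), List.getElem_eraseIdx]
  split_ifs with h
  · rw [List.getD_eq_getElem _ _ (by omega)]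
  · rw [List.getD_eq_getElem _ _ (by omega)]

lemma sum_range_erase {α : Type*} (L : List α) (d : α) (h : α → ℝ) {j : ℕ}
    (hj : j < L.length) :
    ∑ a ∈ range (L.length - 1), h ((L.eraseIdx j).getD a d)
      = ∑ a ∈ (range L.length).erase j, h (L.getD a d) := by
  refine Finset.sum_nbij' (fun a => if a < j then a else a + 1)
    (fun a => if a < j then a else a - 1) ?_ ?_ ?_ ?_ ?_
  · intro a ha; simp only [mem_range] at ha; simp only [mem_erase, mem_range]
    split_ifs <;> omega
  · intro a ha; simp only [mem_erase, mem_range] at ha; simp only [mem_range]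
    split_ifs <;> omega
  · intro a ha; simp only [mem_range] at ha; split_ifs <;> omega
  · intro a ha; simp only [mem_erase, mem_range] at ha; split_ifs <;> omega
  · intro a ha; simp only [mem_range] at ha
    rw [getD_eraseIdx L d hj ha]
    split_ifs <;> rfl

lemma sum_erase_reindex {α : Type*} (L : List α) (d : α) (h : α → ℝ) {j : ℕ}
    (hj : j + 1 < L.length) :
    ∑ a ∈ (range (L.length - 1)).erase j, h ((L.eraseIdx (j+1)).getD a d)
      = ∑ a ∈ ((range L.length).erase j).erase (j+1), h (L.getD a d) := by
  refine Finset.sum_nbij' (fun a => if a < j + 1 then a else a + 1)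
    (fun a => if a < j + 1 then a else a - 1) ?_ ?_ ?_ ?_ ?_
  · intro a ha; simp only [mem_erase, mem_range] at ha
    simp only [mem_erase, mem_range]; split_ifs <;> omega
  · intro a ha; simp only [mem_erase, mem_range] at ha
    simp only [mem_erase, mem_range]; split_ifs <;> omega
  · intro a ha; simp only [mem_erase, mem_range] at ha; split_ifs <;> omega
  · intro a ha; simp only [mem_erase, mem_range] at ha; split_ifs <;> omega
  · intro a ha; simp only [mem_erase, mem_range] at ha
    rw [getD_eraseIdx L d hj (by omega)]
    split_ifs <;> rfl

lemma quad_eraseIdx (Q : ℕ × ℕ → ℕ × ℕ → ℝ) (L : List (ℕ × ℕ)) {j : ℕ} (hj : j < L.length) :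
    quadQ Q (L.eraseIdx j) = ∑ a ∈ (range L.length).erase j, ∑ b ∈ (range L.length).erase j,
      Q (L.getD a (0,0)) (L.getD b (0,0)) := by
  have hl : (L.eraseIdx j).length = L.length - 1 := by simp [List.length_eraseIdx, hj]
  rw [quad_eq_sum, hl]
  have h1 : ∀ a : ℕ, (∑ b ∈ range (L.length - 1),
      Q ((L.eraseIdx j).getD a (0,0)) ((L.eraseIdx j).getD b (0,0)))
      = ∑ b ∈ (range L.length).erase j, Q ((L.eraseIdx j).getD a (0,0)) (L.getD b (0,0)) :=
    fun a => sum_range_erase L (0,0) _ hj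
  simp_rw [h1]
  exact sum_range_erase L (0,0) (fun e => ∑ b ∈ (range L.length).erase j, Q e (L.getD b (0,0))) hj

lemma quad_eraseIdx₂ (Q : ℕ × ℕ → ℕ × ℕ → ℝ) (L : List (ℕ × ℕ)) {j : ℕ} (hj : j + 1 < L.length) :
    quadQ Q ((L.eraseIdx (j+1)).eraseIdx j)
      = ∑ a ∈ ((range L.length).erase j).erase (j+1),
          ∑ b ∈ ((range L.length).erase j).erase (j+1),
            Q (L.getD a (0,0)) (L.getD b (0,0)) := by
  have hl : (L.eraseIdx (j+1)).length = L.length - 1 := by simp [List.length_eraseIdx, hj]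
  rw [quad_eraseIdx Q _ (by omega : j < (L.eraseIdx (j+1)).length), hl]
  have h1 : ∀ a : ℕ, (∑ b ∈ (range (L.length - 1)).erase j,
      Q ((L.eraseIdx (j+1)).getD a (0,0)) ((L.eraseIdx (j+1)).getD b (0,0)))
      = ∑ b ∈ ((range L.length).erase j).erase (j+1),
          Q ((L.eraseIdx (j+1)).getD a (0,0)) (L.getD b (0,0)) :=
    fun a => sum_erase_reindex L (0,0) _ hj
  simp_rw [h1]
  exact sum_erase_reindex L (0,0)
    (fun e => ∑ b ∈ ((range L.length).erase j).erase (j+1), Q e (L.getD b (0,0))) hj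

lemma sum_erase_eq_ite (s : Finset ℕ) (j : ℕ) (g : ℕ → ℝ) :
    ∑ a ∈ s.erase j, g a = ∑ a ∈ s, if a = j then 0 else g a := by
  rw [← Finset.filter_ne' s j, Finset.sum_filter]
  exact Finset.sum_congr rfl fun a _ => by split_ifs <;> simp_all

lemma sum_quad_erase_le (Q : ℕ × ℕ → ℕ × ℕ → ℝ) (hQ0 : ∀ e f, 0 ≤ Q e f)
    (hQd : ∀ e, Q e e = 0) (L : List (ℕ × ℕ)) (h2 : 2 ≤ L.length) :
    ∑ j ∈ range L.length, quadQ Q (L.eraseIdx j) ≤ ((L.length : ℝ) - 2) * quadQ Q L := by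
  set m := L.length with hm
  set G : ℕ → ℕ → ℝ := fun a b => Q (L.getD a (0,0)) (L.getD b (0,0)) with hG
  have step1 : ∑ j ∈ range m, quadQ Q (L.eraseIdx j)
      = ∑ a ∈ range m, ∑ b ∈ range m, ∑ j ∈ range m,
          (if j = a ∨ j = b then 0 else G a b) := by
    rw [Finset.sum_congr rfl (fun j hj => quad_eraseIdx Q L (Finset.mem_range.mp hj))]
    have e1 : ∀ j : ℕ, (∑ a ∈ (range m).erase j, ∑ b ∈ (range m).erase j, G a b)
        = ∑ a ∈ range m, ∑ b ∈ range m,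
            (if a = j then 0 else if b = j then 0 else G a b) := by
      intro j
      rw [sum_erase_eq_ite]
      refine Finset.sum_congr rfl fun a _ => ?_
      split_ifs with h
      · simp
      · rw [sum_erase_eq_ite]
    simp only [← hm]
    have e1' : ∀ j : ℕ, (∑ a ∈ (range m).erase j, ∑ b ∈ (range m).erase j,
        Q (L.getD a (0,0)) (L.getD b (0,0))) = _ := e1
    simp_rw [e1']
    rw [Finset.sum_comm]
    refine Finset.sum_congr rfl fun a _ => ?_
    rw [Finset.sum_comm]
    refine Finset.sum_congr rfl fun b _ => ?_
    refine Finset.sum_congr rfl fun j _ => ?_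
    split_ifs <;> tauto
  rw [step1, quad_eq_sum, Finset.mul_sum]
  refine Finset.sum_le_sum fun a ha => ?_
  rw [Finset.mul_sum]
  refine Finset.sum_le_sum fun b hb => ?_
  rcases eq_or_ne a b with rfl | hab
  · have h1 : Q (L.getD a (0,0)) (L.getD a (0,0)) = 0 := hQd _
    have h0 : G a a = 0 := hQd _
    rw [h1, h0, mul_zero]
    simp
  · have hcount : ∑ j ∈ range m, (if j = a ∨ j = b then 0 else G a b)
        = (((range m).filter (fun j => ¬(j = a ∨ j = b))).card : ℝ) * G a b := by
      rw [Finset.sum_ite, Finset.sum_const, Finset.sum_const]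
      simp [mul_comm]
    rw [hcount]
    have hsub : (range m).filter (fun j => ¬(j = a ∨ j = b)) ⊆ ((range m).erase a).erase b := by
      intro j hj
      simp only [Finset.mem_filter, mem_range, not_or] at hj
      simp only [mem_erase, mem_range]
      tauto
    have hcard : (((range m).erase a).erase b).card = m - 2 := by
      rw [Finset.card_erase_of_mem (Finset.mem_erase.mpr ⟨hab.symm, hb⟩),
        Finset.card_erase_of_mem ha, Finset.card_range]
      omega
    have hle : (((range m).filter (fun j => ¬(j = a ∨ j = b))).card : ℝ) ≤ (m : ℝ) - 2 := by
      have h3 := (Finset.card_le_card hsub).trans_eq hcard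
      calc (((range m).filter (fun j => ¬(j = a ∨ j = b))).card : ℝ)
          ≤ ((m - 2 : ℕ) : ℝ) := Nat.cast_le.mpr h3
        _ = (m : ℝ) - 2 := by push_cast [h2]; ring
    exact mul_le_mul_of_nonneg_right hle (hQ0 _ _)

lemma sum_quad_erase₂_ge (Q : ℕ × ℕ → ℕ × ℕ → ℝ) (hQ0 : ∀ e f, 0 ≤ Q e f)
    (hQd : ∀ e, Q e e = 0) (L : List (ℕ × ℕ)) (h6 : 6 ≤ L.length) :
    ((L.length : ℝ) - 5) * quadQ Q L
      ≤ ∑ j ∈ range (L.length - 1), quadQ Q ((L.eraseIdx (j+1)).eraseIdx j) := by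
  set m := L.length with hm
  set G : ℕ → ℕ → ℝ := fun a b => Q (L.getD a (0,0)) (L.getD b (0,0)) with hG
  have step1 : ∑ j ∈ range (m-1), quadQ Q ((L.eraseIdx (j+1)).eraseIdx j)
      = ∑ a ∈ range m, ∑ b ∈ range m, ∑ j ∈ range (m-1),
          (if j = a ∨ j + 1 = a ∨ j = b ∨ j + 1 = b then 0 else G a b) := by
    rw [Finset.sum_congr rfl
      (fun j hj => quad_eraseIdx₂ Q L (by have := Finset.mem_range.mp hj; omega))]
    have e1 : ∀ j : ℕ, (∑ a ∈ ((range m).erase j).erase (j+1),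
          ∑ b ∈ ((range m).erase j).erase (j+1), G a b)
        = ∑ a ∈ range m, ∑ b ∈ range m,
            (if a = j then 0 else if a = j + 1 then 0 else
              if b = j then 0 else if b = j + 1 then 0 else G a b) := by
      intro j
      rw [sum_erase_eq_ite, sum_erase_eq_ite]
      refine Finset.sum_congr rfl fun a _ => ?_
      split_ifs with h h'
      · simp
      · simp
      · rw [sum_erase_eq_ite, sum_erase_eq_ite]
    simp only [← hm]
    have e1' : ∀ j : ℕ, (∑ a ∈ ((range m).erase j).erase (j+1),
        ∑ b ∈ ((range m).erase j).erase (j+1), Q (L.getD a (0,0)) (L.getD b (0,0))) = _ := e1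
    simp_rw [e1']
    rw [Finset.sum_comm]
    refine Finset.sum_congr rfl fun a _ => ?_
    rw [Finset.sum_comm]
    refine Finset.sum_congr rfl fun b _ => ?_
    refine Finset.sum_congr rfl fun j _ => ?_
    split_ifs <;> tauto
  rw [step1, quad_eq_sum, Finset.mul_sum]
  refine Finset.sum_le_sum fun a ha => ?_
  rw [Finset.mul_sum]
  refine Finset.sum_le_sum fun b hb => ?_
  rcases eq_or_ne a b with rfl | hab
  · have h1 : Q (L.getD a (0,0)) (L.getD a (0,0)) = 0 := hQd _
    have h0 : G a a = 0 := hQd _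
    rw [h1, h0, mul_zero]
    simp
  · have hcount : ∑ j ∈ range (m-1), (if j = a ∨ j + 1 = a ∨ j = b ∨ j + 1 = b then 0 else G a b)
        = (((range (m-1)).filter
            (fun j => ¬(j = a ∨ j + 1 = a ∨ j = b ∨ j + 1 = b))).card : ℝ) * G a b := by
      rw [Finset.sum_ite, Finset.sum_const, Finset.sum_const]
      simp [mul_comm]
    rw [hcount]
    have hbad : (range (m-1)).filter (fun j => (j = a ∨ j + 1 = a ∨ j = b ∨ j + 1 = b))
        ⊆ ({a, a - 1, b, b - 1} : Finset ℕ) := by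
      intro j hj
      simp only [Finset.mem_filter, mem_range] at hj
      simp only [Finset.mem_insert, Finset.mem_singleton]
      omega
    have hbadcard : ({a, a - 1, b, b - 1} : Finset ℕ).card ≤ 4 := by
      refine (Finset.card_insert_le _ _).trans (Nat.succ_le_succ ?_)
      refine (Finset.card_insert_le _ _).trans (Nat.succ_le_succ ?_)
      refine (Finset.card_insert_le _ _).trans (Nat.succ_le_succ ?_)
      simp
    have hcards := Finset.card_filter_add_card_filter_not
      (s := range (m-1)) (p := fun j => (j = a ∨ j + 1 = a ∨ j = b ∨ j + 1 = b))
    have h4 : ((range (m-1)).filter (fun j => (j = a ∨ j + 1 = a ∨ j = b ∨ j + 1 = b))).card ≤ 4 :=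
      (Finset.card_le_card hbad).trans hbadcard
    have hge : m - 5 ≤ ((range (m-1)).filter
        (fun j => ¬(j = a ∨ j + 1 = a ∨ j = b ∨ j + 1 = b))).card := by
      have hr : (range (m-1)).card = m - 1 := Finset.card_range _
      omega
    have hle : (m : ℝ) - 5 ≤ (((range (m-1)).filter
        (fun j => ¬(j = a ∨ j + 1 = a ∨ j = b ∨ j + 1 = b))).card : ℝ) := by
      calc (m : ℝ) - 5 = ((m - 5 : ℕ) : ℝ) := by push_cast [show 5 ≤ m by omega]; ring
        _ ≤ _ := Nat.cast_le.mpr hge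
    exact mul_le_mul_of_nonneg_right hle (hQ0 _ _)

lemma length_arcsOf {V : Type*} (P : List V) : (arcsOf P).length = P.length - 1 := by
  simp only [arcsOf, List.length_zip, List.length_tail]
  omega

lemma getElem_arcsOf {V : Type*} (P : List V) (a : ℕ) (h : a < (arcsOf P).length) :
    (arcsOf P)[a] = (P[a]'(by have := length_arcsOf P; omega),
                     P[a+1]'(by have := length_arcsOf P; omega)) := by
  simp [arcsOf, List.getElem_zip, List.getElem_tail]

lemma getElem_idx_congr {α : Type*} (l : List α) {x y : ℕ} (h : x = y) (hx : x < l.length) :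
    l[x] = l[y]'(h ▸ hx) := by subst h; rfl

set_option maxHeartbeats 2000000 in
lemma arcsOf_eraseIdx (P : List ℕ) {j : ℕ} (hj : j + 2 < P.length) :
    (arcsOf (P.eraseIdx (j+1))).eraseIdx j = ((arcsOf P).eraseIdx (j+1)).eraseIdx j := by
  have hEl : (P.eraseIdx (j+1)).length = P.length - 1 := by
    simp [List.length_eraseIdx]; omega
  have hal : (arcsOf P).length = P.length - 1 := length_arcsOf P
  have hael : (arcsOf (P.eraseIdx (j+1))).length = P.length - 2 := by
    rw [length_arcsOf, hEl]; omega
  have l1 : ((arcsOf P).eraseIdx (j+1)).length = P.length - 2 := by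
    rw [List.length_eraseIdx, hal]; split <;> omega
  have l2 : (((arcsOf P).eraseIdx (j+1)).eraseIdx j).length = P.length - 3 := by
    rw [List.length_eraseIdx, l1]; split <;> omega
  have l3 : ((arcsOf (P.eraseIdx (j+1))).eraseIdx j).length = P.length - 3 := by
    rw [List.length_eraseIdx, hael]; split <;> omega
  apply List.ext_getElem
  · rw [l2, l3]
  intro a h1 h2
  have ha : a < P.length - 3 := by rw [l3] at h1; exact h1
  rw [List.getElem_eraseIdx, List.getElem_eraseIdx]
  by_cases hc : a < j
  · rw [dif_pos hc, dif_pos hc, List.getElem_eraseIdx, dif_pos (by omega : a < j + 1)]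
    rw [getElem_arcsOf (P.eraseIdx (j+1)) a (by omega), getElem_arcsOf P a (by omega)]
    have e1 : (P.eraseIdx (j+1))[a]'(by omega) = P[a]'(by omega) := by
      rw [List.getElem_eraseIdx, dif_pos (by omega : a < j + 1)]
    have e2 : (P.eraseIdx (j+1))[a+1]'(by omega) = P[a+1]'(by omega) := by
      rw [List.getElem_eraseIdx, dif_pos (by omega : a + 1 < j + 1)]
    rw [e1, e2]
  · rw [dif_neg hc, dif_neg hc, List.getElem_eraseIdx, dif_neg (by omega : ¬ a + 1 < j + 1)]
    rw [getElem_arcsOf (P.eraseIdx (j+1)) (a+1) (by omega),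
      getElem_arcsOf P (a+1+1) (by omega)]
    have e1 : (P.eraseIdx (j+1))[a+1]'(by omega) = P[a+1+1]'(by omega) := by
      rw [List.getElem_eraseIdx, dif_neg (by omega : ¬ a + 1 < j + 1)]
    have e2 : (P.eraseIdx (j+1))[a+1+1]'(by omega) = P[a+1+1+1]'(by omega) := by
      rw [List.getElem_eraseIdx, dif_neg (by omega : ¬ a + 1 + 1 < j + 1)]
    rw [e1, e2]

lemma chain'_iff_get_old {R : ℕ → ℕ → Prop} {l : List ℕ} :
    List.Chain' R l ↔ ∀ (i : ℕ) (h : i < l.length - 1),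
      R (l.get ⟨i, by omega⟩) (l.get ⟨i + 1, by omega⟩) := by
  rw [List.Chain', List.isChain_iff_getElem]
  constructor
  · intro h i hi; exact h i (by omega)
  · intro h i hi; exact h i (by omega)

lemma path_bounds {n : ℕ} {P : List ℕ} (hP : IsPath (knArc n) 1 n P) {a : ℕ}
    (ha : a < P.length) : 1 ≤ P[a] ∧ P[a] ≤ n := by
  obtain ⟨hlen, -, -, -, hch⟩ := hP
  rw [chain'_iff_get_old] at hch
  rcases lt_or_ge (a+1) P.length with h | h
  · have := hch a (by omega)
    simp only [List.get_eq_getElem] at this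
    exact ⟨this.1, this.2.1⟩
  · have := hch (a-1) (by omega)
    simp only [List.get_eq_getElem] at this
    have e : P[a-1+1]'(by omega) = P[a] := getElem_idx_congr P (by omega) (by omega)
    rw [e] at this
    exact ⟨this.2.2.1, this.2.2.2.1⟩

lemma path_ne_nil {n : ℕ} {P : List ℕ} (hP : IsPath (knArc n) 1 n P) : P ≠ [] :=
  List.ne_nil_of_length_pos (by have := hP.1; omega)

lemma path_getElem_zero {n : ℕ} {P : List ℕ} (hP : IsPath (knArc n) 1 n P) :
    P[0]'(by have := hP.1; omega) = 1 := by
  have h := hP.2.1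
  rw [List.head?_eq_head (path_ne_nil hP), Option.some_inj, List.head_eq_getElem] at h
  exact h

lemma path_getElem_last {n : ℕ} {P : List ℕ} (hP : IsPath (knArc n) 1 n P) :
    P[P.length - 1]'(by have := hP.1; omega) = n := by
  have h := hP.2.2.1
  rw [List.getLast?_eq_getLast (path_ne_nil hP), Option.some_inj,
    List.getLast_eq_getElem] at h
  exact h

set_option maxHeartbeats 2000000 in
lemma isPath_eraseIdx {n : ℕ} {P : List ℕ} (hP : IsPath (knArc n) 1 n P) {i : ℕ}
    (h1 : 1 ≤ i) (h2 : i + 1 < P.length) (h4 : 4 ≤ P.length) :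
    IsPath (knArc n) 1 n (P.eraseIdx i) := by
  have hb : ∀ a (ha : a < P.length), 1 ≤ P[a] ∧ P[a] ≤ n := fun a ha => path_bounds hP ha
  have hz := path_getElem_zero hP
  have hl := path_getElem_last hP
  obtain ⟨hlen, hhead, hlast, hnd, hch⟩ := hP
  rw [chain'_iff_get_old] at hch
  have hE : (P.eraseIdx i).length = P.length - 1 := by
    rw [List.length_eraseIdx]; split <;> omega
  have hEg : ∀ a (ha : a < P.length - 1),
      (P.eraseIdx i)[a]'(by omega) = if a < i then P[a]'(by omega) else P[a+1]'(by omega) := by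
    intro a ha
    rw [List.getElem_eraseIdx]
    split_ifs <;> rfl
  have hne : P.eraseIdx i ≠ [] := List.ne_nil_of_length_pos (by omega)
  refine ⟨by omega, ?_, ?_, List.Nodup.sublist (List.eraseIdx_sublist P i) hnd, ?_⟩
  · rw [List.head?_eq_head hne, Option.some_inj, List.head_eq_getElem, hEg 0 (by omega),
      if_pos (by omega)]
    exact hz
  · rw [List.getLast?_eq_getLast hne, Option.some_inj, List.getLast_eq_getElem]
    have e0 : (P.eraseIdx i).length - 1 = P.length - 2 := by omega
    have e1 : (P.eraseIdx i)[(P.eraseIdx i).length - 1]'(by omega)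
        = (P.eraseIdx i)[P.length - 2]'(by omega) := getElem_idx_congr _ e0 (by omega)
    rw [e1, hEg (P.length - 2) (by omega), if_neg (by omega)]
    have e2 : P[P.length - 2 + 1]'(by omega) = P[P.length - 1]'(by omega) :=
      getElem_idx_congr _ (by omega) (by omega)
    rw [e2]
    exact hl
  · rw [chain'_iff_get_old]
    intro a ha
    rw [hE] at ha
    simp only [List.get_eq_getElem]
    rw [hEg a (by omega), hEg (a+1) (by omega)]
    rcases lt_trichotomy (a+1) i with hlt | heq | hgt
    · rw [if_pos (by omega), if_pos (by omega)]
      have := hch a (by omega)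
      simpa using this
    · rw [if_pos (by omega), if_neg (by omega)]
      have hb1 := hb a (by omega)
      have hb2 := hb (a+1+1) (by omega)
      have hne12 : P[a]'(by omega) ≠ P[a+1+1]'(by omega) := by
        rw [ne_eq, List.Nodup.getElem_inj_iff hnd]
        omega
      have hnot1 : P[a+1+1]'(by omega) ≠ 1 := by
        intro hcon
        have e : P[a+1+1]'(by omega) = P[0]'(by omega) := hcon.trans hz.symm
        have := (List.Nodup.getElem_inj_iff hnd).mp e
        omega
      have hnotn : P[a]'(by omega) ≠ n := by
        intro hcon
        have e : P[a]'(by omega) = P[P.length - 1]'(by omega) := hcon.trans hl.symm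
        have := (List.Nodup.getElem_inj_iff hnd).mp e
        omega
      refine ⟨hb1.1, hb1.2, hb2.1, hb2.2, hne12, hnot1, hnotn, ?_⟩
      rintro ⟨ha1, hbn⟩
      have e1 : P[a]'(by omega) = P[0]'(by omega) := ha1.trans hz.symm
      have e2 : P[a+1+1]'(by omega) = P[P.length - 1]'(by omega) := hbn.trans hl.symm
      have := (List.Nodup.getElem_inj_iff hnd).mp e1
      have := (List.Nodup.getElem_inj_iff hnd).mp e2
      omega
    · rw [if_neg (by omega), if_neg (by omega)]
      have := hch (a+1) (by omega)
      simpa using this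

lemma getElem_insertIdx_ge {α : Type*} (l : List α) (x : α) {i a : ℕ} (hia : i < a)
    (hal : a ≤ l.length) :
    (l.insertIdx i x)[a]'(by rw [List.length_insertIdx_of_le_length (by omega)]; omega)
      = l[a-1]'(by omega) := by
  obtain ⟨c, rfl⟩ : ∃ c, a = i + c + 1 := ⟨a - i - 1, by omega⟩
  simp only [Nat.add_sub_cancel]
  exact List.getElem_insertIdx_add_succ l x i c (by omega)

set_option maxHeartbeats 2000000 in
lemma isPath_insertIdx {n : ℕ} {P : List ℕ} (hP : IsPath (knArc n) 1 n P) {j w : ℕ}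
    (hj : j + 1 < P.length) (hw1 : 1 ≤ w) (hwn : w ≤ n) (hwP : w ∉ P) :
    IsPath (knArc n) 1 n (P.insertIdx (j+1) w) := by
  have hb : ∀ a (ha : a < P.length), 1 ≤ P[a] ∧ P[a] ≤ n := fun a ha => path_bounds hP ha
  have hz := path_getElem_zero hP
  have hl := path_getElem_last hP
  obtain ⟨hlen, hhead, hlast, hnd, hch⟩ := hP
  rw [chain'_iff_get_old] at hch
  have hI : (P.insertIdx (j+1) w).length = P.length + 1 :=
    List.length_insertIdx_of_le_length (by omega) _
  have hne : P.insertIdx (j+1) w ≠ [] := List.ne_nil_of_length_pos (by omega)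
  have hw1' : w ≠ 1 := fun hcon =>
    hwP (by rw [hcon, ← hz]; exact List.getElem_mem (by omega))
  have hwn' : w ≠ n := fun hcon =>
    hwP (by rw [hcon, ← hl]; exact List.getElem_mem (by omega))
  have hnotlast : ∀ a (ha : a < P.length - 1), P[a]'(by omega) ≠ n := by
    intro a ha hcon
    have e : P[a]'(by omega) = P[P.length - 1]'(by omega) := hcon.trans hl.symm
    have := (List.Nodup.getElem_inj_iff hnd).mp e
    omega
  have hnotone : ∀ a (ha : a < P.length), a ≠ 0 → P[a] ≠ 1 := by
    intro a ha h0 hcon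
    have e : P[a] = P[0]'(by omega) := hcon.trans hz.symm
    have := (List.Nodup.getElem_inj_iff hnd).mp e
    omega
  refine ⟨by omega, ?_, ?_, ?_, ?_⟩
  · have e0 : (P.insertIdx (j+1) w)[0]'(by omega) = P[0]'(by omega) :=
      List.getElem_insertIdx_of_lt (by omega) (by omega)
    rw [List.head?_eq_head hne, Option.some_inj, List.head_eq_getElem]
    simp only [e0]
    exact hz
  · rw [List.getLast?_eq_getLast hne, Option.some_inj, List.getLast_eq_getElem]
    have e1 : (P.insertIdx (j+1) w)[(P.insertIdx (j+1) w).length - 1]'(by omega)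
        = (P.insertIdx (j+1) w)[P.length]'(by omega) :=
      getElem_idx_congr _ (by omega) (by omega)
    have e2 : (P.insertIdx (j+1) w)[P.length]'(by omega) = P[P.length - 1]'(by omega) :=
      getElem_insertIdx_ge P w (by omega : j + 1 < P.length) (le_refl _)
    simp only [e1, e2]
    exact hl
  · have hperm := List.perm_insertIdx w P (show j + 1 ≤ P.length by omega)
    exact hperm.nodup_iff.mpr (List.nodup_cons.mpr ⟨hwP, hnd⟩)
  · rw [chain'_iff_get_old]
    intro a ha
    rw [hI] at ha
    simp only [List.get_eq_getElem]
    rcases lt_trichotomy (a+1) (j+1) with hlt | heq | hgt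
    · have e1 : (P.insertIdx (j+1) w)[a]'(by omega) = P[a]'(by omega) :=
        List.getElem_insertIdx_of_lt (by omega) (by omega)
      have e2 : (P.insertIdx (j+1) w)[a+1]'(by omega) = P[a+1]'(by omega) :=
        List.getElem_insertIdx_of_lt (by omega) (by omega)
      simp only [e1, e2]
      have := hch a (by omega)
      simpa using this
    · have ea : a = j := by omega
      have e1 : (P.insertIdx (j+1) w)[a]'(by omega) = (P.insertIdx (j+1) w)[j]'(by omega) :=
        getElem_idx_congr _ ea (by omega)
      have e2 : (P.insertIdx (j+1) w)[a+1]'(by omega)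
          = (P.insertIdx (j+1) w)[j+1]'(by omega) :=
        getElem_idx_congr _ (by omega) (by omega)
      have e3 : (P.insertIdx (j+1) w)[j]'(by omega) = P[j]'(by omega) :=
        List.getElem_insertIdx_of_lt (by omega) (by omega)
      have e4 : (P.insertIdx (j+1) w)[j+1]'(by omega) = w :=
        List.getElem_insertIdx_self (by omega)
      simp only [e1, e2, e3, e4]
      have hb1 := hb j (by omega)
      refine ⟨hb1.1, hb1.2, hw1, hwn, ?_, hw1', hnotlast j (by omega), ?_⟩
      · intro hcon
        exact hwP (by rw [← hcon]; exact List.getElem_mem (by omega))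
      · rintro ⟨-, hcon⟩
        exact hwn' hcon
    · rcases eq_or_lt_of_le (Nat.succ_le_of_lt hgt) with heq2 | hgt2
      · have ea : a = j + 1 := by omega
        have e1 : (P.insertIdx (j+1) w)[a]'(by omega)
            = (P.insertIdx (j+1) w)[j+1]'(by omega) :=
          getElem_idx_congr _ ea (by omega)
        have e2 : (P.insertIdx (j+1) w)[a+1]'(by omega)
            = (P.insertIdx (j+1) w)[j+1+1]'(by omega) :=
          getElem_idx_congr _ (by omega) (by omega)
        have e3 : (P.insertIdx (j+1) w)[j+1]'(by omega) = w :=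
          List.getElem_insertIdx_self (by omega)
        have e4 : (P.insertIdx (j+1) w)[j+1+1]'(by omega) = P[j+1+1-1]'(by omega) :=
          getElem_insertIdx_ge P w (by omega : j + 1 < j + 1 + 1) (by omega)
        simp only [e1, e2, e3, e4]
        have hb1 := hb (j+1+1-1) (by omega)
        refine ⟨hw1, hwn, hb1.1, hb1.2, ?_, ?_, hwn', ?_⟩
        · intro hcon
          exact hwP (by rw [hcon]; exact List.getElem_mem (by omega))
        · exact hnotone (j+1+1-1) (by omega) (by omega)
        · rintro ⟨hcon, -⟩
          exact hw1' hcon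
      · have e1 : (P.insertIdx (j+1) w)[a]'(by omega) = P[a-1]'(by omega) :=
          getElem_insertIdx_ge P w (by omega : j + 1 < a) (by omega)
        have e2 : (P.insertIdx (j+1) w)[a+1]'(by omega) = P[a+1-1]'(by omega) :=
          getElem_insertIdx_ge P w (by omega : j + 1 < a + 1) (by omega)
        simp only [e1, e2]
        have := hch (a-1) (by omega)
        simp only [List.get_eq_getElem] at this
        have e : P[a+1-1]'(by omega) = P[a-1+1]'(by omega) :=
          getElem_idx_congr _ (by omega) (by omega)
        simp only [e]
        exact this



lemma pathsFinite (n m : ℕ) :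
    {P : List ℕ | IsPath (knArc n) 1 n P ∧ P.length = m}.Finite := by
  refine Set.Finite.subset ((List.finite_length_eq (Fin (n+1)) m).image (List.map Fin.val)) ?_
  rintro P ⟨hP, hlen⟩
  refine ⟨P.attach.map (fun x => ⟨x.1, ?_⟩), ?_, ?_⟩
  · obtain ⟨a, ha, hx⟩ := List.mem_iff_getElem.mp x.2
    have := (path_bounds hP ha).2
    omega
  · simp [hlen]
  · rw [List.map_map]
    have : (Fin.val ∘ fun (x : {x // x ∈ P}) =>
        (⟨x.1, by
          obtain ⟨a, ha, hx⟩ := List.mem_iff_getElem.mp x.2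
          have := (path_bounds hP ha).2
          omega⟩ : Fin (n+1))) = fun (x : {x // x ∈ P}) => (x.1 : ℕ) := rfl
    rw [this]
    exact (List.attach_map_val (l := P) (f := fun x => x)).trans (List.map_id P)

lemma cost_zero_eq (Q : ℕ × ℕ → ℕ × ℕ → ℝ) (P : List ℕ) :
    cost (fun _ => 0) Q P = quadQ Q (arcsOf P) := by
  simp [cost, linCost, quadQ]

lemma insertIdx_eraseIdx_getElem (P : List ℕ) {i : ℕ} (h : i < P.length) :
    (P.eraseIdx i).insertIdx i (P[i]) = P := by
  have hE : (P.eraseIdx i).length = P.length - 1 := by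
    rw [List.length_eraseIdx]; split <;> omega
  apply List.ext_getElem
  · rw [List.length_insertIdx_of_le_length (by omega), hE]; omega
  intro a h1 h2
  rcases lt_trichotomy a i with hlt | heqa | hgt
  · have e1 : ((P.eraseIdx i).insertIdx i (P[i]))[a]'(by omega)
        = (P.eraseIdx i)[a]'(by omega) :=
      List.getElem_insertIdx_of_lt hlt (by rw [List.length_insertIdx_of_le_length (by omega)]; omega)
    rw [e1, List.getElem_eraseIdx, dif_pos hlt]
  · subst heqa
    have e1 : ((P.eraseIdx a).insertIdx a (P[a]))[a]'(by omega) = P[a] :=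
      List.getElem_insertIdx_self (by rw [List.length_insertIdx_of_le_length (by omega)]; omega)
    rw [e1]
  · have e1 : ((P.eraseIdx i).insertIdx i (P[i]))[a]'(by omega)
        = (P.eraseIdx i)[a-1]'(by omega) :=
      getElem_insertIdx_ge _ _ hgt (by omega)
    rw [e1, List.getElem_eraseIdx, dif_neg (by omega)]
    exact getElem_idx_congr P (by omega) (by omega)

lemma CPsum_eq (n : ℕ) (Q : ℕ × ℕ → ℕ × ℕ → ℝ) (k : ℕ) :
    CPsum n Q k = ∑ P ∈ (pathsFinite n (k+1)).toFinset, quadQ Q (arcsOf P) := by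
  have h := finsum_mem_eq_finite_toFinset_sum (fun P => cost (fun _ => 0) Q P)
    (pathsFinite n (k+1))
  have h2 : CPsum n Q k = ∑ P ∈ (pathsFinite n (k+1)).toFinset, cost (fun _ => 0) Q P := h
  rw [h2]
  exact Finset.sum_congr rfl fun P _ => cost_zero_eq Q P


set_option maxHeartbeats 2000000 in
/-- On `K_n^*` (`n ≥ 7`), `CP_k ≤ (n-k)·((k-3)/(k-5))·CP_{k-1}` for `k = 6,…,n-1`. -/
theorem stmt_9 (n : ℕ) (hn : 7 ≤ n) (Q : ℕ × ℕ → ℕ × ℕ → ℝ)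
    (hQ0 : ∀ e f, 0 ≤ Q e f) (hQs : ∀ e f, Q e f = Q f e) (hQd : ∀ e, Q e e = 0)
    (hQpath : ∀ e f,
      (¬ ∃ P, IsPath (knArc n) 1 n P ∧ e ∈ arcsOf P ∧ f ∈ arcsOf P) → Q e f = 0) :
    ∀ k, 6 ≤ k → k ≤ n - 1 →
      CPsum n Q k ≤
        ((n : ℝ) - k) * (((k : ℝ) - 3) / ((k : ℝ) - 5)) * CPsum n Q (k - 1) := by
  intro k hk6 hkn
  have hkn' : k + 1 ≤ n := by omega
  have hmemPk : ∀ {P : List ℕ}, P ∈ (pathsFinite n (k+1)).toFinset ↔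
      (IsPath (knArc n) 1 n P ∧ P.length = k + 1) := by
    intro P; rw [Set.Finite.mem_toFinset]; exact Iff.rfl
  have hmemPk1 : ∀ {P : List ℕ}, P ∈ (pathsFinite n k).toFinset ↔
      (IsPath (knArc n) 1 n P ∧ P.length = k) := by
    intro P; rw [Set.Finite.mem_toFinset]; exact Iff.rfl
  have hCPk : CPsum n Q k = ∑ P ∈ (pathsFinite n (k+1)).toFinset, quadQ Q (arcsOf P) :=
    CPsum_eq n Q k
  have hCPk1 : CPsum n Q (k-1) = ∑ P ∈ (pathsFinite n k).toFinset, quadQ Q (arcsOf P) := by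
    have h := CPsum_eq n Q (k-1)
    rw [show k - 1 + 1 = k from by omega] at h
    exact h
  -- Step A
  have stepA : ((k:ℝ) - 5) * CPsum n Q k
      ≤ ∑ P ∈ (pathsFinite n (k+1)).toFinset, ∑ j ∈ range (k-1),
          quadQ Q (((arcsOf P).eraseIdx (j+1)).eraseIdx j) := by
    rw [hCPk, Finset.mul_sum]
    refine Finset.sum_le_sum fun P hP => ?_
    have hlenA : (arcsOf P).length = k := by
      rw [length_arcsOf, (hmemPk.mp hP).2]; omega
    have h := sum_quad_erase₂_ge Q hQ0 hQd (arcsOf P) (by rw [hlenA]; omega)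
    rw [hlenA] at h
    exact h
  -- Step B : bijection
  have stepB : ∑ P ∈ (pathsFinite n (k+1)).toFinset, ∑ j ∈ range (k-1),
        quadQ Q (((arcsOf P).eraseIdx (j+1)).eraseIdx j)
      = ∑ x ∈ (((pathsFinite n k).toFinset ×ˢ (Icc 1 n ×ˢ range (k-1))).filter
          (fun x => x.2.1 ∉ x.1)),
          quadQ Q ((arcsOf x.1).eraseIdx x.2.2) := by
    rw [← Finset.sum_product ((pathsFinite n (k+1)).toFinset) (range (k-1))
      (fun x => quadQ Q (((arcsOf x.1).eraseIdx (x.2+1)).eraseIdx x.2))]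
    refine Finset.sum_nbij'
      (fun x => (x.1.eraseIdx (x.2+1), (x.1.getD (x.2+1) 0, x.2)))
      (fun y => (y.1.insertIdx (y.2.2+1) y.2.1, y.2.2)) ?_ ?_ ?_ ?_ ?_
    · rintro ⟨P, j⟩ hx
      rw [Finset.mem_product] at hx
      dsimp only at hx ⊢
      obtain ⟨hP', hj'⟩ := hx
      obtain ⟨hP, hPlen⟩ := hmemPk.mp hP'
      rw [Finset.mem_range] at hj'
      have hnd : P.Nodup := hP.2.2.2.1
      have hEl : (P.eraseIdx (j+1)).length = k := by
        rw [List.length_eraseIdx, hPlen, if_pos (by omega)]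
        omega
      have hgd : P.getD (j+1) 0 = P[j+1]'(by omega) :=
        List.getD_eq_getElem P 0 (by omega)
      simp only [Finset.mem_filter, Finset.mem_product, Finset.mem_range, Finset.mem_Icc]
      refine ⟨⟨?_, ⟨?_, hj'⟩⟩, ?_⟩
      · exact hmemPk1.mpr ⟨isPath_eraseIdx hP (by omega) (by omega) (by omega), hEl⟩
      · rw [hgd]
        exact path_bounds hP (by omega)
      · rw [hgd]
        intro hmem
        obtain ⟨a, haa, hEq⟩ := List.mem_iff_getElem.mp hmem
        rw [List.getElem_eraseIdx] at hEq
        rw [hEl] at haa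
        split_ifs at hEq with hcase
        all_goals
          first
          | (rw [List.Nodup.getElem_inj_iff hnd] at hEq; omega)
          | omega
    · rintro ⟨P', w, jj⟩ hy
      simp only [Finset.mem_filter, Finset.mem_product, Finset.mem_range, Finset.mem_Icc] at hy
      dsimp only at hy ⊢
      obtain ⟨⟨hP1', ⟨hw, hjj⟩⟩, hwP⟩ := hy
      obtain ⟨hP1, hP1len⟩ := hmemPk1.mp hP1'
      rw [Finset.mem_product]
      dsimp only
      constructor
      · refine hmemPk.mpr ⟨isPath_insertIdx hP1 (by omega) hw.1 hw.2 hwP, ?_⟩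
        rw [List.length_insertIdx_of_le_length (by omega), hP1len]
      · rw [Finset.mem_range]
        exact hjj
    · rintro ⟨P, j⟩ hx
      rw [Finset.mem_product] at hx
      dsimp only at hx ⊢
      obtain ⟨hP', hj'⟩ := hx
      obtain ⟨hP, hPlen⟩ := hmemPk.mp hP'
      rw [Finset.mem_range] at hj'
      have hgd : P.getD (j+1) 0 = P[j+1]'(by omega) :=
        List.getD_eq_getElem P 0 (by omega)
      rw [hgd, insertIdx_eraseIdx_getElem P (by omega)]
    · rintro ⟨P', w, jj⟩ hy
      simp only [Finset.mem_filter, Finset.mem_product, Finset.mem_range, Finset.mem_Icc] at hy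
      dsimp only at hy ⊢
      obtain ⟨⟨hP1', ⟨hw, hjj⟩⟩, hwP⟩ := hy
      obtain ⟨hP1, hP1len⟩ := hmemPk1.mp hP1'
      rw [List.eraseIdx_insertIdx_self (i := jj+1) (l := P')]
      have hgd : (P'.insertIdx (jj+1) w).getD (jj+1) 0
          = (P'.insertIdx (jj+1) w)[jj+1]'(by
              rw [List.length_insertIdx_of_le_length (by omega)]; omega) :=
        List.getD_eq_getElem _ 0 _
      rw [hgd, List.getElem_insertIdx_self (by rw [List.length_insertIdx_of_le_length (by omega)]; omega)]
    · rintro ⟨P, j⟩ hx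
      rw [Finset.mem_product] at hx
      dsimp only at hx ⊢
      obtain ⟨hP', hj'⟩ := hx
      obtain ⟨hP, hPlen⟩ := hmemPk.mp hP'
      rw [Finset.mem_range] at hj'
      rw [arcsOf_eraseIdx P (by omega)]
  -- Step C : collapse the w-sum
  have stepC : ∑ x ∈ (((pathsFinite n k).toFinset ×ˢ (Icc 1 n ×ˢ range (k-1))).filter
        (fun x => x.2.1 ∉ x.1)), quadQ Q ((arcsOf x.1).eraseIdx x.2.2)
      = ∑ P' ∈ (pathsFinite n k).toFinset,
          ((n:ℝ) - k) * ∑ j ∈ range (k-1), quadQ Q ((arcsOf P').eraseIdx j) := by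
    rw [Finset.sum_filter, Finset.sum_product]
    refine Finset.sum_congr rfl fun P' hP' => ?_
    rw [Finset.sum_product]
    have inner : ∀ w : ℕ, (∑ j ∈ range (k-1),
        if w ∉ P' then quadQ Q ((arcsOf P').eraseIdx j) else 0)
        = if w ∉ P' then (∑ j ∈ range (k-1), quadQ Q ((arcsOf P').eraseIdx j)) else 0 := by
      intro w; split_ifs <;> simp
    simp_rw [inner]
    rw [← Finset.sum_filter, Finset.sum_const]
    obtain ⟨hP1, hP1len⟩ := hmemPk1.mp hP'
    have hnd : P'.Nodup := hP1.2.2.2.1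
    have hsub : P'.toFinset ⊆ Icc 1 n := by
      intro v hv
      rw [List.mem_toFinset] at hv
      obtain ⟨a, ha, rfl⟩ := List.mem_iff_getElem.mp hv
      exact Finset.mem_Icc.mpr (path_bounds hP1 ha)
    have hfe : (Icc 1 n).filter (fun w => w ∉ P') = Icc 1 n \ P'.toFinset := by
      ext w
      simp [List.mem_toFinset, Finset.mem_sdiff]
    rw [hfe, Finset.card_sdiff_of_subset hsub, List.toFinset_card_of_nodup hnd, Nat.card_Icc, hP1len,
      nsmul_eq_mul]
    congr 1
    rw [Nat.cast_sub (by omega : k ≤ n + 1 - 1)]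
    norm_num
  -- Step D
  have hnk : (0:ℝ) ≤ (n:ℝ) - k := by
    have : (k:ℝ) ≤ (n:ℝ) := by exact_mod_cast (by omega : k ≤ n)
    linarith
  have stepD : ∑ P' ∈ (pathsFinite n k).toFinset,
        ((n:ℝ) - k) * ∑ j ∈ range (k-1), quadQ Q ((arcsOf P').eraseIdx j)
      ≤ ((n:ℝ) - k) * (((k:ℝ) - 3) * CPsum n Q (k-1)) := by
    rw [hCPk1, Finset.mul_sum, Finset.mul_sum]
    refine Finset.sum_le_sum fun P' hP' => ?_
    have hlen' : (arcsOf P').length = k - 1 := by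
      rw [length_arcsOf, (hmemPk1.mp hP').2]
    have h := sum_quad_erase_le Q hQ0 hQd (arcsOf P') (by rw [hlen']; omega)
    rw [hlen'] at h
    have hco : ((k-1 : ℕ) : ℝ) - 2 = (k:ℝ) - 3 := by
      push_cast [show 1 ≤ k from by omega]
      ring
    rw [hco] at h
    exact mul_le_mul_of_nonneg_left h hnk
  have main : ((k:ℝ)-5) * CPsum n Q k ≤ ((n:ℝ)-k) * (((k:ℝ)-3) * CPsum n Q (k-1)) := by
    have h1 := stepA
    rw [stepB, stepC] at h1
    exact h1.trans stepD
  have h5 : (0:ℝ) < (k:ℝ) - 5 := by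
    have : (6:ℝ) ≤ (k:ℝ) := by exact_mod_cast hk6
    linarith
  have hrw : ((n : ℝ) - k) * (((k : ℝ) - 3) / ((k : ℝ) - 5)) * CPsum n Q (k - 1)
      = (((n:ℝ)-k) * (((k:ℝ)-3) * CPsum n Q (k-1))) / ((k:ℝ)-5) := by
    field_simp
  rw [hrw, le_div_iff₀ h5]
  linarith [main]
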